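/- Let X, Y be independent standard Gaussian random variables, a > 0, b ∈ ℝ, c > 0, β = (c−b)/a, and M = cY · sgn(aX + bY − cY). Then M has a probability density function given by f_M(z) = (2/c) φ(z/c) Φ(−β z/c), where φ and Φ are the standard normal density and distribution function. -/

import Mathlib

open MeasureTheory ProbabilityTheory Real
open scoped ENNReal

/-- Standard normal density. -/
noncomputable def stdPdf (x : ℝ) : ℝ := (Real.sqrt (2 * Real.pi))⁻¹ * Real.exp (-x ^ 2 / 2)

/-- Standard normal distribution function. -/
noncomputable def stdCdf (x : ℝ) : ℝ := ∫ t in Set.Iic x, stdPdf t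

lemma stdPdf_eq : gaussianPDFReal 0 1 = stdPdf := by
  funext x; simp [gaussianPDFReal, stdPdf]

lemma stdPdf_nonneg (x : ℝ) : 0 ≤ stdPdf x := by
  unfold stdPdf; positivity

lemma stdPdf_even (x : ℝ) : stdPdf (-x) = stdPdf x := by simp [stdPdf]

lemma integrable_stdPdf : Integrable stdPdf := stdPdf_eq ▸ integrable_gaussianPDFReal 0 1

lemma measurable_stdPdf : Measurable stdPdf := stdPdf_eq ▸ measurable_gaussianPDFReal 0 1

lemma stdCdf_nonneg (x : ℝ) : 0 ≤ stdCdf x :=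
  setIntegral_nonneg measurableSet_Iic fun t _ => stdPdf_nonneg t

lemma monotone_stdCdf : Monotone stdCdf := fun x y hxy =>
  setIntegral_mono_set integrable_stdPdf.integrableOn
    (Filter.Eventually.of_forall fun t => stdPdf_nonneg t)
    (HasSubset.Subset.eventuallyLE (Set.Iic_subset_Iic.2 hxy))

lemma measurable_stdCdf : Measurable stdCdf := monotone_stdCdf.measurable

lemma measurable_realSign : Measurable Real.sign := by
  unfold Real.sign
  exact measurable_const.ite measurableSet_Iio
    (measurable_const.ite measurableSet_Ioi measurable_const)

lemma gauss_Ioi (t : ℝ) : gaussianReal 0 1 (Set.Ioi t) = ENNReal.ofReal (stdCdf (-t)) := by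
  rw [gaussianReal_apply_eq_integral 0 one_ne_zero, stdPdf_eq]
  congr 1
  have h1 : stdCdf (-t) = ∫ x in Set.Ioi t, stdPdf (-x) :=
    (integral_comp_neg_Ioi t stdPdf).symm
  rw [h1]
  simp_rw [stdPdf_even]

lemma gauss_Iio (t : ℝ) : gaussianReal 0 1 (Set.Iio t) = ENNReal.ofReal (stdCdf t) := by
  rw [gaussianReal_apply_eq_integral 0 one_ne_zero, stdPdf_eq]
  congr 1
  rw [stdCdf, MeasureTheory.integral_Iic_eq_integral_Iio]

lemma gauss_singleton (t : ℝ) : gaussianReal 0 1 {t} = 0 :=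
  gaussianReal_absolutelyContinuous 0 one_ne_zero (measure_singleton t)

/-- With `X, Y` independent standard Gaussians, `a > 0`, `c > 0`, `β = (c−b)/a`, the
random variable `M = cY · sgn(aX + bY − cY)` has density `z ↦ (2/c) φ(z/c) Φ(−βz/c)`. -/
theorem density_of_negative_payoff {Ω : Type*} [MeasureSpace Ω]
    [IsProbabilityMeasure (ℙ : Measure Ω)]
    (X Y : Ω → ℝ) (hXm : Measurable X) (hYm : Measurable Y)
    (hindep : IndepFun X Y ℙ)
    (hX : Measure.map X ℙ = gaussianReal 0 1)
    (hY : Measure.map Y ℙ = gaussianReal 0 1)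
    (a b c β : ℝ) (ha : 0 < a) (hc : 0 < c) (hβ : β = (c - b) / a) :
    Measure.map (fun ω => c * Y ω * Real.sign (a * X ω + b * Y ω - c * Y ω)) ℙ =
      volume.withDensity
        (fun z => ENNReal.ofReal ((2 / c) * stdPdf (z / c) * stdCdf (-β * z / c))) := by
  classical
  have hc' : c ≠ 0 := hc.ne'
  have haβ : a * β = c - b := by rw [hβ]; field_simp
  set μ : Measure ℝ := gaussianReal 0 1 with hμ
  have hjoint : Measure.map (fun ω => (Y ω, X ω)) ℙ = μ.prod μ := by
    rw [show μ.prod μ = (Measure.map Y ℙ).prod (Measure.map X ℙ) by rw [hX, hY]]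
    exact (indepFun_iff_map_prod_eq_prod_map_map hYm.aemeasurable hXm.aemeasurable).1
      hindep.symm
  set g : ℝ × ℝ → ℝ := fun p => c * p.1 * Real.sign (a * p.2 + b * p.1 - c * p.1) with hgdef
  have hgm : Measurable g := by
    apply Measurable.mul
    · exact measurable_fst.const_mul c
    · exact measurable_realSign.comp (by fun_prop)
  have hMg : (fun ω => c * Y ω * Real.sign (a * X ω + b * Y ω - c * Y ω))
      = g ∘ (fun ω => (Y ω, X ω)) := rfl
  rw [hMg, ← Measure.map_map hgm (hYm.prodMk hXm), hjoint]
  ext s hs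
  rw [Measure.map_apply hgm hs, Measure.prod_apply (hgm hs)]
  -- key pointwise computation of the inner measure
  have harg : ∀ y x : ℝ, a * x + b * y - c * y = a * (x - β * y) := by
    intro y x
    rw [mul_sub, ← mul_assoc, haβ]; ring
  have key : ∀ y : ℝ, μ (Prod.mk y ⁻¹' (g ⁻¹' s)) =
      (if c * y ∈ s then ENNReal.ofReal (stdCdf (-(β * y))) else 0) +
      (if -(c * y) ∈ s then ENNReal.ofReal (stdCdf (β * y)) else 0) := by
    intro y
    set A : Set ℝ := Prod.mk y ⁻¹' (g ⁻¹' s) with hA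
    have hgpos : ∀ x : ℝ, β * y < x → g (y, x) = c * y := by
      intro x hx
      show c * y * Real.sign (a * x + b * y - c * y) = c * y
      rw [harg, Real.sign_of_pos (mul_pos ha (sub_pos.2 hx)), mul_one]
    have hgneg : ∀ x : ℝ, x < β * y → g (y, x) = -(c * y) := by
      intro x hx
      show c * y * Real.sign (a * x + b * y - c * y) = -(c * y)
      rw [harg, Real.sign_of_neg (mul_neg_of_pos_of_neg ha (sub_neg.2 hx)), mul_neg_one]
    have hA1 : A ∩ Set.Ioi (β * y) = (if c * y ∈ s then Set.Ioi (β * y) else ∅) := by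
      split_ifs with h
      · ext x
        refine ⟨fun h' => h'.2, fun hx => ⟨?_, hx⟩⟩
        show g (y, x) ∈ s
        rw [hgpos x hx]; exact h
      · ext x
        simp only [Set.mem_inter_iff, Set.mem_empty_iff_false, iff_false, not_and]
        intro hxA hx
        exact h (hgpos x hx ▸ hxA)
    have hA2 : A ∩ Set.Iio (β * y) = (if -(c * y) ∈ s then Set.Iio (β * y) else ∅) := by
      split_ifs with h
      · ext x
        refine ⟨fun h' => h'.2, fun hx => ⟨?_, hx⟩⟩
        show g (y, x) ∈ s
        rw [hgneg x hx]; exact h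
      · ext x
        simp only [Set.mem_inter_iff, Set.mem_empty_iff_false, iff_false, not_and]
        intro hxA hx
        exact h (hgneg x hx ▸ hxA)
    have hdecomp : μ A = μ (A ∩ Set.Ioi (β * y)) + μ (A ∩ Set.Iio (β * y)) := by
      have h1 : μ (A ∩ Set.Ioi (β * y)) + μ (A \ Set.Ioi (β * y)) = μ A :=
        measure_inter_add_diff A measurableSet_Ioi
      have h2 : A \ Set.Ioi (β * y) = A ∩ Set.Iic (β * y) := by
        ext x; simp [Set.mem_diff, not_lt]
      have h3 : μ (A ∩ Set.Iic (β * y)) = μ (A ∩ Set.Iio (β * y)) := by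
        apply le_antisymm
        · calc μ (A ∩ Set.Iic (β * y))
              ≤ μ ((A ∩ Set.Iio (β * y)) ∪ {β * y}) := by
                apply measure_mono
                rintro x ⟨hxA, hx⟩
                rcases lt_or_eq_of_le (Set.mem_Iic.mp hx) with h | h
                · exact Or.inl ⟨hxA, h⟩
                · exact Or.inr h
            _ ≤ μ (A ∩ Set.Iio (β * y)) + μ {β * y} := measure_union_le _ _
            _ = μ (A ∩ Set.Iio (β * y)) := by rw [hμ, gauss_singleton, add_zero]
        · exact measure_mono (Set.inter_subset_inter_right _ Set.Iio_subset_Iic_self)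
      rw [← h1, h2, h3]
    rw [hdecomp, hA1, hA2]
    congr 1
    · split_ifs with h
      · exact gauss_Ioi (β * y)
      · exact measure_empty
    · split_ifs with h
      · exact gauss_Iio (β * y)
      · exact measure_empty
  simp only [key]
  -- the common density on the z-side
  set h : ℝ → ℝ≥0∞ := fun z => Set.indicator s (fun _ => (1 : ℝ≥0∞)) z *
      ENNReal.ofReal (stdCdf (-β * z / c)) * ENNReal.ofReal (stdPdf (z / c)) with hhdef
  have hhm : Measurable h := by
    apply Measurable.mul
    · apply Measurable.mul
      · exact measurable_const.indicator hs
      · exact ENNReal.measurable_ofReal.comp (measurable_stdCdf.comp (by fun_prop))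
    · exact ENNReal.measurable_ofReal.comp (measurable_stdPdf.comp (by fun_prop))
  -- rewrite the gaussian measure as a density against volume
  have hμd : μ = volume.withDensity (fun x => ENNReal.ofReal (stdPdf x)) := by
    rw [hμ, gaussianReal_of_var_ne_zero 0 one_ne_zero]
    congr 1
    funext x
    rw [gaussianPDF, stdPdf_eq]
  rw [hμd, lintegral_withDensity_eq_lintegral_mul volume
      measurable_stdPdf.ennreal_ofReal]
  · have hkey2 : ∀ y : ℝ, ((fun x => ENNReal.ofReal (stdPdf x)) *
        fun y => (if c * y ∈ s then ENNReal.ofReal (stdCdf (-(β * y))) else 0) +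
          (if -(c * y) ∈ s then ENNReal.ofReal (stdCdf (β * y)) else 0)) y
        = h (c * y) + h (-c * y) := by
      intro y
      have e1 : -(β * (c * y)) / c = -(β * y) := by field_simp; try ring
      have e2 : c * y / c = y := by field_simp; try ring
      have e3 : -(β * -(c * y)) / c = β * y := by field_simp; try ring
      have e4 : -(c * y) / c = -y := by field_simp; try ring
      simp only [Pi.mul_apply, hhdef, neg_mul, e1, e2, e3, e4, stdPdf_even]
      rw [mul_add]
      congr 1
      · rw [Set.indicator_apply]
        split_ifs with hmem
        · rw [one_mul, mul_comm]
        · simp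
      · rw [Set.indicator_apply]
        split_ifs with hmem
        · rw [one_mul, mul_comm]
        · simp
    simp only [hkey2]
    rw [lintegral_add_left (show Measurable fun y : ℝ => h (c * y) from hhm.comp (measurable_const_mul c))]
    have hscale : ∀ d : ℝ, d ≠ 0 →
        (∫⁻ y, h (d * y)) = ENNReal.ofReal |d⁻¹| * ∫⁻ z, h z := by
      intro d hd
      calc (∫⁻ y, h (d * y))
          = ∫⁻ z, h z ∂(Measure.map (d * ·) volume) :=
            (lintegral_map hhm (measurable_const_mul d)).symm
        _ = ENNReal.ofReal |d⁻¹| * ∫⁻ z, h z := by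
            rw [Real.map_volume_mul_left hd, lintegral_smul_measure, smul_eq_mul]
    rw [hscale c hc', hscale (-c) (neg_ne_zero.2 hc')]
    have habs : |c⁻¹| = 1 / c := by
      rw [abs_of_pos (inv_pos.2 hc), one_div]
    have habs' : |(-c)⁻¹| = 1 / c := by
      rw [abs_inv, abs_neg, abs_of_pos hc, one_div]
    rw [habs, habs', withDensity_apply _ hs]
    have hint : (∫⁻ z in s, ENNReal.ofReal
        ((2 / c) * stdPdf (z / c) * stdCdf (-β * z / c)) ∂volume)
        = ENNReal.ofReal (2 / c) * ∫⁻ z, h z := by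
      rw [← lintegral_const_mul _ hhm, ← lintegral_indicator hs _]
      congr 1
      funext z
      rw [Set.indicator_apply, hhdef]
      simp only [Set.indicator_apply]
      split_ifs with hmem
      · rw [one_mul]
        rw [ENNReal.ofReal_mul (mul_nonneg (by positivity) (stdPdf_nonneg _)),
          ENNReal.ofReal_mul (by positivity : (0:ℝ) ≤ 2 / c)]
        ring
      · simp
    rw [hint]
    rw [← two_mul, ← mul_assoc]
    congr 1
    rw [show (2:ℝ)/c = 2 * (1/c) by ring, ENNReal.ofReal_mul (by norm_num : (0:ℝ) ≤ 2),
      ENNReal.ofReal_ofNat]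
  · -- measurability of the inner function
    apply Measurable.add
    · have : (fun y => if c * y ∈ s then ENNReal.ofReal (stdCdf (-(β * y))) else 0)
          = Set.indicator ((fun y => c * y) ⁻¹' s)
            (fun y => ENNReal.ofReal (stdCdf (-(β * y)))) := by
        funext y; rw [Set.indicator_apply]; rfl
      rw [this]
      exact Measurable.indicator
        (ENNReal.measurable_ofReal.comp (measurable_stdCdf.comp (by fun_prop)))
        ((measurable_const_mul c) hs)
    · have : (fun y => if -(c * y) ∈ s then ENNReal.ofReal (stdCdf (β * y)) else 0)
          = Set.indicator ((fun y => -(c * y)) ⁻¹' s)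
            (fun y => ENNReal.ofReal (stdCdf (β * y))) := by
        funext y; rw [Set.indicator_apply]; rfl
      rw [this]
      exact Measurable.indicator
        (ENNReal.measurable_ofReal.comp (measurable_stdCdf.comp (by fun_prop)))
        ((by fun_prop : Measurable fun y : ℝ => -(c * y)) hs)
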